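/- Let b, c, σ, a, α, β > 0 with b > aβ, and fix θ > 0. Suppose A: [0,∞) → ℝ solves A'(t) = -b A(t) + (1/2)σ² A(t)² + β(e^{a A(t)} - 1) with A(0) = -θ. Then A(t) < 0 for all t ≥ 0 and A(t) → 0 as t → ∞. -/

import Mathlib

open Real Filter Set

/-- The Riccati vector field. -/
noncomputable def riccatiG (a b σ β : ℝ) (y : ℝ) : ℝ :=
  -b * y + (1 / 2) * σ ^ 2 * y ^ 2 + β * (Real.exp (a * y) - 1)

lemma riccatiG_lower {a b σ β : ℝ} (ha : 0 < a) (hβ : 0 < β) (y : ℝ) :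
    (b - a * β) * (-y) ≤ riccatiG a b σ β y := by
  have h1 : a * y + 1 ≤ Real.exp (a * y) := Real.add_one_le_exp _
  have h2 : 0 ≤ (1 / 2) * σ ^ 2 * y ^ 2 := by positivity
  have h3 : β * (a * y) ≤ β * (Real.exp (a * y) - 1) := by nlinarith
  simp only [riccatiG]
  nlinarith

lemma riccatiG_nonneg {a b σ β : ℝ} (ha : 0 < a) (hβ : 0 < β) (hba : a * β < b)
    {y : ℝ} (hy : y ≤ 0) : 0 ≤ riccatiG a b σ β y := by
  have := riccatiG_lower (b := b) (σ := σ) ha hβ y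
  nlinarith

lemma riccatiG_upper {a b σ β θ : ℝ} (ha : 0 < a) (hβ : 0 < β) (hθ : 0 < θ)
    {y : ℝ} (h1 : -θ ≤ y) (h2 : y ≤ 0) :
    riccatiG a b σ β y ≤ (b + (1 / 2) * σ ^ 2 * θ + a * β) * (-y) := by
  have he : Real.exp (a * y) ≤ 1 := Real.exp_le_one_iff.2 (by nlinarith)
  have hy2 : y ^ 2 ≤ θ * (-y) := by nlinarith
  have h3 : β * (Real.exp (a * y) - 1) ≤ 0 := by nlinarith
  have h4 : 0 ≤ a * β * (-y) := mul_nonneg (by positivity) (by linarith)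
  simp only [riccatiG]
  nlinarith [sq_nonneg σ]

/-- The Riccati exponent `A(t)` of the Laplace transform stays negative and tends to `0`. -/
theorem riccati_negative_to_zero (a b c σ α β θ : ℝ)
    (ha : 0 < a) (hb : 0 < b) (hc : 0 < c) (hσ : 0 < σ) (hα : 0 < α) (hβ : 0 < β)
    (hba : a * β < b) (hθ : 0 < θ)
    (A : ℝ → ℝ)
    (hA : ∀ t, 0 ≤ t →
      HasDerivAt A (-b * A t + (1 / 2) * σ ^ 2 * (A t) ^ 2
        + β * (Real.exp (a * A t) - 1)) t)
    (hA0 : A 0 = -θ) :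
    (∀ t, 0 ≤ t → A t < 0) ∧ Tendsto A atTop (nhds 0) := by
  set K : ℝ := b + (1 / 2) * σ ^ 2 * θ + a * β with hK
  have hA' : ∀ t, 0 ≤ t → HasDerivAt A (riccatiG a b σ β (A t)) t := fun t ht => hA t ht
  have hcont : ContinuousOn A (Ici 0) := fun t ht =>
    ((hA' t ht).continuousAt).continuousWithinAt
  have habs : ∀ y : ℝ, -θ ≤ y → y ≤ 0 → |riccatiG a b σ β y| ≤ K * |y| := by
    intro y h1 h2
    rw [abs_of_nonneg (riccatiG_nonneg ha hβ hba h2), abs_of_nonpos h2]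
    rw [hK]
    exact riccatiG_upper ha hβ hθ h1 h2
  -- monotonicity on any interval where A is nonpositive
  have hmono_aux : ∀ t₂ : ℝ, 0 ≤ t₂ → (∀ s ∈ Icc (0:ℝ) t₂, A s ≤ 0) →
      ∀ x ∈ Icc (0:ℝ) t₂, ∀ y ∈ Icc (0:ℝ) t₂, x ≤ y → A x ≤ A y := by
    intro t₂ ht₂ hnp x hx y hy hxy
    have h := (convex_Icc (0:ℝ) t₂).mul_sub_le_image_sub_of_le_deriv
      (f := A) (hcont.mono Icc_subset_Ici_self)
      (fun s hs => by
        rw [interior_Icc] at hs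
        exact ((hA' s hs.1.le).differentiableAt).differentiableWithinAt)
      (C := 0)
      (fun s hs => by
        rw [interior_Icc] at hs
        rw [(hA' s hs.1.le).deriv]
        exact riccatiG_nonneg ha hβ hba (hnp s ⟨hs.1.le, hs.2.le⟩))
      x hx y hy hxy
    linarith
  -- Step 1: A stays negative
  have hneg : ∀ t, 0 ≤ t → A t < 0 := by
    by_contra hcon
    push_neg at hcon
    obtain ⟨t₁, ht₁, hAt₁⟩ := hcon
    have ht₁pos : 0 < t₁ := by
      rcases lt_or_eq_of_le ht₁ with h | h
      · exact h
      · exfalso; rw [← h, hA0] at hAt₁; linarith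
    -- first zero of A
    have hz : ∃ z ∈ Icc (0:ℝ) t₁, A z = 0 := by
      have := intermediate_value_Icc ht₁ (hcont.mono Icc_subset_Ici_self)
      have h0 : (0:ℝ) ∈ Icc (A 0) (A t₁) := ⟨by rw [hA0]; linarith, hAt₁⟩
      exact this h0
    set S : Set ℝ := Icc (0:ℝ) t₁ ∩ A ⁻¹' {0} with hS
    have hSne : S.Nonempty := by
      obtain ⟨z, hz1, hz2⟩ := hz
      exact ⟨z, hz1, by simpa using hz2⟩
    have hSclosed : IsClosed S :=
      (hcont.mono Icc_subset_Ici_self).preimage_isClosed_of_isClosed isClosed_Icc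
        isClosed_singleton
    have hSbdd : BddBelow S := (bddBelow_Icc).mono inter_subset_left
    set t₀ : ℝ := sInf S with ht₀def
    have ht₀mem : t₀ ∈ S := hSclosed.csInf_mem hSne hSbdd
    have ht₀Icc : t₀ ∈ Icc (0:ℝ) t₁ := ht₀mem.1
    have hAt₀ : A t₀ = 0 := by simpa using ht₀mem.2
    have ht₀pos : 0 < t₀ := by
      rcases lt_or_eq_of_le ht₀Icc.1 with h | h
      · exact h
      · exfalso; rw [← h] at hAt₀; rw [hA0] at hAt₀; linarith
    -- A is negative before t₀
    have hlt : ∀ s, 0 ≤ s → s < t₀ → A s < 0 := by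
      intro s hs hst
      by_contra hcs
      push_neg at hcs
      have hz' : ∃ z ∈ Icc (0:ℝ) s, A z = 0 := by
        have := intermediate_value_Icc hs (hcont.mono Icc_subset_Ici_self)
        exact this ⟨by rw [hA0]; linarith, hcs⟩
      obtain ⟨z, hz1, hz2⟩ := hz'
      have hzS : z ∈ S := ⟨⟨hz1.1, by linarith [hz1.2, ht₀Icc.2]⟩, by simpa using hz2⟩
      have := csInf_le hSbdd hzS
      rw [← ht₀def] at this
      linarith [hz1.2]
    have hle : ∀ s ∈ Icc (0:ℝ) t₀, A s ≤ 0 := by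
      intro s hs
      rcases lt_or_eq_of_le hs.2 with h | h
      · exact (hlt s hs.1 h).le
      · rw [h, hAt₀]
    have hlow : ∀ s ∈ Icc (0:ℝ) t₀, -θ ≤ A s := by
      intro s hs
      have := hmono_aux t₀ ht₀pos.le hle 0 ⟨le_refl _, ht₀pos.le⟩ s hs hs.1
      rw [hA0] at this; linarith
    -- Grönwall backwards in time
    set B : ℝ → ℝ := fun s => A (t₀ - s) with hB
    have hmem : ∀ s ∈ Icc (0:ℝ) t₀, t₀ - s ∈ Icc (0:ℝ) t₀ := by
      intro s hs; exact ⟨by linarith [hs.2], by linarith [hs.1]⟩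
    have hBcont : ContinuousOn B (Icc 0 t₀) := by
      apply (hcont.mono Icc_subset_Ici_self).comp
        ((continuous_const.sub continuous_id).continuousOn)
      intro s hs; exact hmem s hs
    have hBderiv : ∀ s ∈ Ico (0:ℝ) t₀,
        HasDerivWithinAt B (riccatiG a b σ β (A (t₀ - s)) * (-1)) (Ici s) s := by
      intro s hs
      have h1 : HasDerivAt (fun s : ℝ => t₀ - s) (-1) s := by
        simpa using (hasDerivAt_id s).const_sub t₀
      have h2 : 0 ≤ t₀ - s := by linarith [hs.2]
      have h3 := (hA' (t₀ - s) h2).comp s h1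
      exact (h3 : HasDerivAt B _ s).hasDerivWithinAt
    have hbound : ∀ s ∈ Ico (0:ℝ) t₀,
        ‖riccatiG a b σ β (A (t₀ - s)) * (-1)‖ ≤ K * ‖B s‖ + 0 := by
      intro s hs
      have hm := hmem s ⟨hs.1, hs.2.le⟩
      have := habs (A (t₀ - s)) (hlow _ hm) (hle _ hm)
      simp only [norm_mul, norm_neg, norm_one, mul_one, Real.norm_eq_abs, add_zero]
      simpa using this
    have hB0 : ‖B 0‖ ≤ 0 := by simp [hB, hAt₀]
    have := norm_le_gronwallBound_of_norm_deriv_right_le hBcont hBderiv hB0 hbound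
      t₀ ⟨ht₀pos.le, le_refl _⟩
    rw [gronwallBound_ε0_δ0] at this
    have hBt₀ : B t₀ = -θ := by simp [hB, hA0]
    rw [hBt₀] at this
    simp only [Real.norm_eq_abs, abs_neg, abs_of_pos hθ] at this
    linarith
  -- Step 2: monotone on [0, ∞)
  have hmono : ∀ x, 0 ≤ x → ∀ y, x ≤ y → A x ≤ A y := by
    intro x hx y hxy
    have h := (convex_Ici (0:ℝ)).mul_sub_le_image_sub_of_le_deriv
      (f := A) hcont
      (fun s hs => by
        rw [interior_Ici] at hs
        exact ((hA' s (le_of_lt hs)).differentiableAt).differentiableWithinAt)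
      (C := 0)
      (fun s hs => by
        rw [interior_Ici] at hs
        rw [(hA' s (le_of_lt hs)).deriv]
        exact riccatiG_nonneg ha hβ hba (hneg s (le_of_lt hs)).le)
      x hx y (le_trans hx hxy) hxy
    linarith
  refine ⟨hneg, ?_⟩
  -- Step 3: for every ε there is a time where A exceeds -ε
  have hreach : ∀ ε : ℝ, 0 < ε → ∃ T, 0 ≤ T ∧ -ε < A T := by
    intro ε hε
    by_contra hcon
    push_neg at hcon
    set δ : ℝ := (b - a * β) * ε with hδ
    have hδpos : 0 < δ := by
      apply mul_pos (by linarith) hε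
    set T : ℝ := θ / δ + 1 with hT
    have hTpos : 0 < T := by positivity
    have h := (convex_Ici (0:ℝ)).mul_sub_le_image_sub_of_le_deriv
      (f := A) hcont
      (fun s hs => by
        rw [interior_Ici] at hs
        exact ((hA' s (le_of_lt hs)).differentiableAt).differentiableWithinAt)
      (C := δ)
      (fun s hs => by
        rw [interior_Ici] at hs
        rw [(hA' s (le_of_lt hs)).deriv]
        have h1 := riccatiG_lower (b := b) (σ := σ) ha hβ (A s)
        have h2 : A s ≤ -ε := hcon s (le_of_lt hs)
        have : δ ≤ (b - a * β) * (-A s) := by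
          rw [hδ]
          apply mul_le_mul_of_nonneg_left (by linarith) (by linarith)
        linarith)
      0 Set.self_mem_Ici T (Set.mem_Ici.2 hTpos.le) hTpos.le
    have hAT : A T ≤ -ε := hcon T hTpos.le
    have hδT : δ * T = θ + δ := by
      rw [hT]; field_simp
    rw [hA0] at h
    rw [sub_zero] at h
    rw [hδT] at h
    linarith
  -- conclude convergence
  rw [Metric.tendsto_atTop]
  intro ε hε
  obtain ⟨T, hT0, hT⟩ := hreach ε hε
  refine ⟨T, fun t ht => ?_⟩
  have h1 : A T ≤ A t := hmono T hT0 t ht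
  have h2 : A t < 0 := hneg t (le_trans hT0 ht)
  rw [Real.dist_eq, sub_zero, abs_lt]
  constructor <;> linarith
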